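/- arXiv:2004.11754 — 3 statements merged into one kernel-verified Lean document; each statement's English description precedes it below -/
import Mathlib

section
/- Let u : [0, t''] → ℝ be C^1 on (0,t''] with u' > 0 satisfying u'(t₂) ≥ (t₁/t₂)^{n/(n+1)} u'(t₁) for all 0 < t₁ ≤ t₂ ≤ t''. If u(t'') - u(t) ≤ A for all t ∈ (0, t''), then for all t ∈ (0, t''), u'(t) ≤ A / ((n+1)·t^{n/(n+1)}·((t'')^{1/(n+1)} - t^{1/(n+1)})). -/
/-- Upper speed bound from the integrated Harnack inequality. -/
theorem deriv_upper_bound_of_harnack (n : ℕ) (hn : 1 ≤ n) (u : ℝ → ℝ) (t'' A : ℝ)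
    (ht'' : 0 < t'') (hA : 0 < A)
    (hderiv : ∀ t ∈ Set.Ioc (0 : ℝ) t'', HasDerivAt u (deriv u t) t)
    (hpos : ∀ t ∈ Set.Ioc (0 : ℝ) t'', 0 < deriv u t)
    (hmono : ∀ t₁ t₂ : ℝ, 0 < t₁ → t₁ ≤ t₂ → t₂ ≤ t'' →
      (t₁ / t₂) ^ ((n : ℝ) / ((n : ℝ) + 1)) * deriv u t₁ ≤ deriv u t₂)
    (hbound : ∀ t ∈ Set.Ioo (0 : ℝ) t'', u t'' - u t ≤ A) :
    ∀ t ∈ Set.Ioo (0 : ℝ) t'',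
      deriv u t ≤ A / (((n : ℝ) + 1) * t ^ ((n : ℝ) / ((n : ℝ) + 1)) *
        (t'' ^ ((1 : ℝ) / ((n : ℝ) + 1)) - t ^ ((1 : ℝ) / ((n : ℝ) + 1)))) := by
  intro t ht
  obtain ⟨ht0, htt⟩ := ht
  have hn1 : (0:ℝ) < (n:ℝ) + 1 := by positivity
  set α : ℝ := 1 / ((n:ℝ) + 1) with hαdef
  set β : ℝ := (n:ℝ) / ((n:ℝ) + 1) with hβdef
  have hαpos : 0 < α := by positivity
  have hβα : α - 1 = -β := by
    rw [hαdef, hβdef]; field_simp; ring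
  set c : ℝ := deriv u t * (((n:ℝ) + 1) * t ^ β) with hc
  set g : ℝ → ℝ := fun s => u s - c * s ^ α with hg
  have hgderiv : ∀ s ∈ Set.Ioc (0:ℝ) t'',
      HasDerivAt g (deriv u s - c * (α * s ^ (α - 1))) s := by
    intro s hs
    exact (hderiv s hs).sub
      ((Real.hasDerivAt_rpow_const (Or.inl hs.1.ne')).const_mul c)
  have hsub : Set.Icc t t'' ⊆ Set.Ioc (0:ℝ) t'' := fun s hs => ⟨lt_of_lt_of_le ht0 hs.1, hs.2⟩
  have hmonoG : MonotoneOn g (Set.Icc t t'') := by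
    apply monotoneOn_of_deriv_nonneg (convex_Icc t t'')
    · intro s hs
      exact ((hgderiv s (hsub hs)).differentiableAt.continuousAt).continuousWithinAt
    · intro s hs
      rw [interior_Icc] at hs
      exact ((hgderiv s (hsub ⟨hs.1.le, hs.2.le⟩)).differentiableAt).differentiableWithinAt
    · intro s hs
      rw [interior_Icc] at hs
      have hs0 : 0 < s := lt_trans ht0 hs.1
      have hsmem : s ∈ Set.Ioc (0:ℝ) t'' := ⟨hs0, hs.2.le⟩
      rw [(hgderiv s hsmem).deriv]
      have hkey : c * (α * s ^ (α - 1)) = (t / s) ^ β * deriv u t := by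
        rw [hβα, Real.rpow_neg hs0.le, Real.div_rpow ht0.le hs0.le, hc, hαdef]
        field_simp
      rw [hkey]
      have := hmono t s ht0 hs.1.le hs.2.le
      linarith
  have hglet : g t ≤ g t'' :=
    hmonoG ⟨le_refl t, htt.le⟩ ⟨htt.le, le_refl t''⟩ htt.le
  have hAb : u t'' - u t ≤ A := hbound t ⟨ht0, htt⟩
  have hchain : c * (t'' ^ α - t ^ α) ≤ A := by
    simp only [hg] at hglet
    nlinarith
  have hrpowlt : t ^ α < t'' ^ α := Real.rpow_lt_rpow ht0.le htt hαpos
  have hD : 0 < ((n:ℝ) + 1) * t ^ β * (t'' ^ α - t ^ α) := by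
    have h1 : (0:ℝ) < t ^ β := Real.rpow_pos_of_pos ht0 β
    have h2 : 0 < t'' ^ α - t ^ α := sub_pos.mpr hrpowlt
    positivity
  rw [le_div_iff₀ hD]
  calc deriv u t * (((n:ℝ) + 1) * t ^ β * (t'' ^ α - t ^ α))
      = c * (t'' ^ α - t ^ α) := by rw [hc]; ring
    _ ≤ A := hchain
end

section
/- Let d(x) = dist(x, ∂Ω) for a bounded convex domain Ω ⊂ ℝ^n with smooth boundary, and suppose all principal curvatures of ∂Ω are bounded above by λ₀ > 0. Then at any point x in the tubular neighborhood {0 < d(x) < 1/λ₀} where d is smooth, the function φ = -L log d (L > 0) satisfies det D²φ / (1+|Dφ|²)^{(n+1)/2} ≤ (1/L)·∏_{i=1}^{n-1} λᵢ(π(x))/(1 - λᵢ(π(x)) d(x)), where π(x) ∈ ∂Ω is the nearest boundary point and λᵢ are the principal curvatures of ∂Ω at π(x). -/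
open scoped BigOperators

/-- The barrier computation: for `φ = -L log d`, in the adapted orthonormal frame where
`Dd = e_n` and `D²d = diag(-λᵢ/(1-λᵢ d), 0)`, one has
`det D²φ / (1+|Dφ|²)^{(n+1)/2} ≤ (1/L) ∏ᵢ λᵢ/(1-λᵢ d)`. -/
theorem log_dist_barrier_estimate (n : ℕ) (hn : 1 ≤ n)
    (L d lam₀ : ℝ) (hL : 0 < L) (hd : 0 < d) (hlam₀ : 0 < lam₀) (hd' : d < 1 / lam₀)
    (lam : Fin (n - 1) → ℝ) (hlam : ∀ i, 0 < lam i ∧ lam i ≤ lam₀)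
    (Dd : Fin n → ℝ) (hDd : Dd = fun i : Fin n => if (i : ℕ) = n - 1 then (1 : ℝ) else 0)
    (D2d : Matrix (Fin n) (Fin n) ℝ)
    (hD2d : D2d = Matrix.diagonal (fun i : Fin n =>
      if h : (i : ℕ) < n - 1 then -lam ⟨(i : ℕ), h⟩ / (1 - lam ⟨(i : ℕ), h⟩ * d) else (0 : ℝ)))
    (Dφ : Fin n → ℝ) (hDφ : Dφ = fun i => -(L / d) * Dd i)
    (D2φ : Matrix (Fin n) (Fin n) ℝ)
    (hD2φ : D2φ = (L / d ^ 2) • Matrix.of (fun i j => Dd i * Dd j) - (L / d) • D2d) :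
    D2φ.det / (1 + ∑ i, (Dφ i) ^ 2) ^ (((n : ℝ) + 1) / 2) ≤
      (1 / L) * ∏ i, lam i / (1 - lam i * d) := by
  obtain ⟨m, rfl⟩ : ∃ m, n = m + 1 := ⟨n - 1, (Nat.succ_pred_eq_of_pos hn).symm⟩
  have hd1 : lam₀ * d < 1 := by
    have := (lt_div_iff₀ hlam₀).mp hd'; linarith
  have hfac : ∀ i : Fin (m + 1 - 1), 0 < lam i / (1 - lam i * d) := by
    intro i
    obtain ⟨h1, h2⟩ := hlam i
    have : lam i * d < 1 := by nlinarith
    exact div_pos h1 (by linarith)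
  set P : ℝ := ∏ i, lam i / (1 - lam i * d) with hP
  have hPpos : 0 < P := Finset.prod_pos fun i _ => hfac i
  have hLd : (0 : ℝ) < L / d := div_pos hL hd
  -- the gradient norm squared
  have hsum : ∑ i, (Dφ i) ^ 2 = (L / d) ^ 2 := by
    subst hDφ hDd
    have : ∀ i : Fin (m + 1),
        (-(L / d) * (if (i : ℕ) = m + 1 - 1 then (1 : ℝ) else 0)) ^ 2
          = if i = Fin.last m then (L / d) ^ 2 else 0 := by
      intro i
      by_cases h : i = Fin.last m
      · subst h; simp [Fin.last]
      · have : (i : ℕ) ≠ m := fun hh => h (Fin.ext hh)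
        simp [this, h]
    simp only [this]
    simp
  -- D²φ is diagonal
  have hdiag : D2φ = Matrix.diagonal (fun i : Fin (m + 1) =>
      if h : (i : ℕ) < m then L / d * (lam ⟨(i : ℕ), h⟩ / (1 - lam ⟨(i : ℕ), h⟩ * d))
      else L / d ^ 2) := by
    subst hD2φ hD2d hDd
    ext i j
    by_cases hij : i = j
    · subst hij
      by_cases h : (i : ℕ) < m
      · have h' : (i : ℕ) ≠ m := Nat.ne_of_lt h
        simp [Matrix.diagonal, h, h', neg_div, mul_div_assoc]
      · have h' : (i : ℕ) = m := by omega
        simp [Matrix.diagonal, h, h']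
    · have key : (i : ℕ) ≠ m ∨ (j : ℕ) ≠ m := by
        by_contra hc; push_neg at hc; exact hij (Fin.ext (hc.1.trans hc.2.symm))
      rcases key with hk | hk <;>
        simp [Matrix.diagonal_apply_ne _ hij, hk]
  -- determinant
  have hdet : D2φ.det = (1 / L) * (L / d) ^ (m + 2) * P := by
    rw [hdiag, Matrix.det_diagonal, Fin.prod_univ_castSucc]
    have h1 : ∀ i : Fin m,
        (if h : ((Fin.castSucc i : Fin (m+1)) : ℕ) < m then
          L / d * (lam ⟨((Fin.castSucc i : Fin (m+1)) : ℕ), h⟩ /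
            (1 - lam ⟨((Fin.castSucc i : Fin (m+1)) : ℕ), h⟩ * d))
        else L / d ^ 2) = L / d * (lam i / (1 - lam i * d)) := by
      intro i
      have h : ((Fin.castSucc i : Fin (m+1)) : ℕ) < m := i.isLt
      simp [h]
    simp only [h1]
    have h2 : ¬ ((Fin.last m : Fin (m+1)) : ℕ) < m := by simp
    rw [dif_neg h2, Finset.prod_mul_distrib, Finset.prod_const]
    have hPeq : (∏ i : Fin m, lam i / (1 - lam i * d)) = P := rfl
    rw [hPeq]
    rw [Finset.card_univ, Fintype.card_fin]
    field_simp
    have hdd : d ^ 2 * d⁻¹ ^ 2 = 1 := by rw [← mul_pow, mul_inv_cancel₀ hd.ne', one_pow]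
    linear_combination (-(L ^ 2 * L ^ m * d⁻¹ ^ m)) * hdd
  rw [hdet, hsum]
  have hE : (((m + 1 : ℕ) : ℝ) + 1) / 2 = ((m : ℝ) + 2) / 2 := by push_cast; ring
  rw [hE]
  have hbase : (0 : ℝ) < 1 + (L / d) ^ 2 := by positivity
  have hApos : (0 : ℝ) < (1 + (L / d) ^ 2) ^ (((m : ℝ) + 2) / 2) :=
    Real.rpow_pos_of_pos hbase _
  have key : ((L / d) ^ 2 : ℝ) ^ (((m : ℝ) + 2) / 2) = (L / d) ^ (m + 2) := by
    rw [← Real.rpow_natCast (L / d) 2, ← Real.rpow_mul hLd.le,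
      show (((2 : ℕ) : ℝ)) * (((m : ℝ) + 2) / 2) = ((m + 2 : ℕ) : ℝ) by push_cast; ring,
      Real.rpow_natCast]
  have hpow : (L / d) ^ (m + 2) ≤ (1 + (L / d) ^ 2) ^ (((m : ℝ) + 2) / 2) := by
    rw [← key]
    exact Real.rpow_le_rpow (sq_nonneg _) (by linarith) (by positivity)
  rw [div_le_iff₀ hApos]
  calc 1 / L * (L / d) ^ (m + 2) * P = (1 / L * P) * (L / d) ^ (m + 2) := by ring
    _ ≤ (1 / L * P) * (1 + (L / d) ^ 2) ^ (((m : ℝ) + 2) / 2) :=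
        mul_le_mul_of_nonneg_left hpow (by positivity)
    _ = 1 / L * P * (1 + (L / d) ^ 2) ^ (((m : ℝ) + 2) / 2) := by ring
end

section
/- Let U ⊂ ℝ^{n+1} be a convex open set containing points (x₀, a_k) with a_k → +∞ and (x₀, b_k) with b_k → -∞ for some fixed x₀ ∈ ℝ^n. Then for every (x, s) ∈ U and every t ∈ ℝ, the point (x, t) ∈ U; that is, U is invariant under all vertical translations. -/
open Filter

private lemma aux_up (n : ℕ)
    (U : Set (EuclideanSpace ℝ (Fin n) × ℝ)) (hUo : IsOpen U) (hUc : Convex ℝ U)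
    (x₀ : EuclideanSpace ℝ (Fin n)) (a : ℕ → ℝ)
    (ha : Tendsto a atTop atTop) (haU : ∀ k, (x₀, a k) ∈ U)
    (x : EuclideanSpace ℝ (Fin n)) (s : ℝ) (hs : (x, s) ∈ U)
    (t : ℝ) (hts : s < t) : (x, t) ∈ U := by
  -- the weight sequence
  set L : ℕ → ℝ := fun k => (t - s) / (a k - s) with hL
  have has : Tendsto (fun k => a k - s) atTop atTop := by
    simpa [sub_eq_add_neg] using tendsto_atTop_add_const_right atTop (-s) ha
  have hL0 : Tendsto L atTop (nhds 0) := tendsto_const_nhds.div_atTop has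
  -- the auxiliary base points
  set y : ℕ → EuclideanSpace ℝ (Fin n) := fun k => (1 - L k)⁻¹ • (x - L k • x₀) with hy
  have hf : ContinuousAt (fun r : ℝ => (1 - r)⁻¹ • (x - r • x₀)) 0 := by
    refine ContinuousAt.smul (f := fun r : ℝ => (1 - r)⁻¹) (g := fun r : ℝ => x - r • x₀) ?_ ?_
    · exact ((continuousAt_const.sub continuousAt_id).inv₀ (by norm_num))
    · exact continuousAt_const.sub (continuousAt_id.smul continuousAt_const)
  have hyx : Tendsto y atTop (nhds x) := by
    have := hf.tendsto.comp hL0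
    simpa [Function.comp_def] using this
  have hyU : ∀ᶠ k in atTop, (y k, s) ∈ U := by
    have hys : Tendsto (fun k => (y k, s)) atTop (nhds (x, s)) :=
      hyx.prodMk_nhds tendsto_const_nhds
    exact hys.eventually (hUo.eventually_mem hs)
  have hat : ∀ᶠ k in atTop, t < a k := ha.eventually_gt_atTop t
  obtain ⟨k, hk1, hk2⟩ := (hyU.and hat).exists
  have h1 : (0:ℝ) < a k - s := by linarith
  have hL0' : 0 < L k := div_pos (by linarith) h1
  have hL1 : L k < 1 := (div_lt_one h1).2 (by linarith)
  have hmem : (L k) • ((x₀, a k) : EuclideanSpace ℝ (Fin n) × ℝ) + (1 - L k) • (y k, s) ∈ U :=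
    hUc (haU k) hk1 hL0'.le (by linarith) (by ring)
  have heq : (L k) • ((x₀, a k) : EuclideanSpace ℝ (Fin n) × ℝ) + (1 - L k) • (y k, s)
      = (x, t) := by
    have h1L : (1 : ℝ) - L k ≠ 0 := by linarith
    refine Prod.ext ?_ ?_
    · show L k • x₀ + (1 - L k) • ((1 - L k)⁻¹ • (x - L k • x₀)) = x
      rw [smul_inv_smul₀ h1L]
      abel
    · show L k * a k + (1 - L k) * s = t
      have h2 : L k * (a k - s) = t - s := div_mul_cancel₀ _ h1.ne'
      rw [mul_sub] at h2
      linarith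
  rwa [heq] at hmem

/-- A convex open set in `ℝⁿ × ℝ` containing points with arbitrarily large and
arbitrarily negative last coordinate on a fixed vertical line is invariant under
all vertical translations. -/
theorem convex_open_vertical_invariant (n : ℕ)
    (U : Set (EuclideanSpace ℝ (Fin n) × ℝ)) (hUo : IsOpen U) (hUc : Convex ℝ U)
    (x₀ : EuclideanSpace ℝ (Fin n)) (a b : ℕ → ℝ)
    (ha : Tendsto a atTop atTop) (hb : Tendsto b atTop atBot)
    (haU : ∀ k, (x₀, a k) ∈ U) (hbU : ∀ k, (x₀, b k) ∈ U) :
    ∀ x : EuclideanSpace ℝ (Fin n), ∀ s : ℝ, (x, s) ∈ U → ∀ t : ℝ, (x, t) ∈ U := by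
  intro x s hs t
  rcases lt_trichotomy s t with h | h | h
  · exact aux_up n U hUo hUc x₀ a ha haU x s hs t h
  · rwa [← h]
  · -- reflect the last coordinate
    set f : EuclideanSpace ℝ (Fin n) × ℝ → EuclideanSpace ℝ (Fin n) × ℝ :=
      fun p => (p.1, -p.2) with hf
    have hlin : IsLinearMap ℝ f := by
      constructor
      · intro p q; simp [hf, Prod.ext_iff]; ring
      · intro c p; simp [hf, Prod.ext_iff]
    set V : Set (EuclideanSpace ℝ (Fin n) × ℝ) := f ⁻¹' U with hV
    have hVo : IsOpen V := hUo.preimage (continuous_fst.prodMk continuous_snd.neg)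
    have hVc : Convex ℝ V := hUc.is_linear_preimage hlin
    have hnb : Tendsto (fun k => -(b k)) atTop atTop := tendsto_neg_atBot_atTop.comp hb
    have hbV : ∀ k, (x₀, -(b k)) ∈ V := by
      intro k; simp only [hV, Set.mem_preimage, hf, neg_neg]; exact hbU k
    have hsV : (x, -s) ∈ V := by
      simp only [hV, Set.mem_preimage, hf, neg_neg]; exact hs
    have := aux_up n V hVo hVc x₀ (fun k => -(b k)) hnb hbV x (-s) hsV (-t) (by linarith)
    simpa only [hV, Set.mem_preimage, hf, neg_neg] using this
end
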